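/- For every α, β ∈ {−1, 1}: (i) the maximal collinear subsets of the configuration C²_{α,β} in ℙ²(ℝ) are exactly the thirteen sets {V₁,S₁,S₃,S₆,S₁₀}, {V₁,S₂,S₄}, {V₁,S₅,S₇}, {V₁,S₈,S₉}, {V₂,S₁,S₄,S₇,S₉}, {V₂,S₂,S₃}, {V₂,S₅,S₆}, {V₂,S₈,S₁₀}, {V₃,S₁,S₂}, {V₃,S₃,S₅}, {V₃,S₄,S₈}, {V₃,S₆,S₇}, {V₃,S₉,S₁₀} (a three-element subset is collinear if and only if it is contained in one of these sets); and (ii) every bijection f of C²_{α,β} preserving collinearity of triples in both directions satisfies f({V₁,V₂,V₃}) = {V₁,V₂,V₃}. -/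

import Mathlib

noncomputable section

/-- The real projective plane `ℙ²(ℝ)`. -/
abbrev ProjPlaneR := Projectivization ℝ (Fin 3 → ℝ)

/-- A vector `![a,b,c]` with a nonzero coordinate is nonzero. -/
theorem vne (a b c : ℝ) (i : Fin 3) (h : ![a, b, c] i ≠ 0) : ![a, b, c] ≠ 0 :=
  fun he => h (by rw [he]; simp)

/-- The point `(a : b : c)` of `ℙ²(ℝ)`. -/
def mkP (a b c : ℝ) (h : ![a, b, c] ≠ 0) : ProjPlaneR :=
  Projectivization.mk ℝ ![a, b, c] h

/-- A set of points of `ℙ²(ℝ)` lies on a common projective line iff some nonzero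
linear form vanishes on (representatives of) all of them. -/
def ProjCollinear (s : Set ProjPlaneR) : Prop :=
  ∃ f : (Fin 3 → ℝ) →ₗ[ℝ] ℝ, f ≠ 0 ∧ ∀ p ∈ s, f p.rep = 0

/-! The points of the configuration `C²_{α,β}`. -/

def V₁ : ProjPlaneR := mkP 0 1 0 (vne _ _ _ 1 (by norm_num))
def V₂ : ProjPlaneR := mkP 1 0 0 (vne _ _ _ 0 (by norm_num))
def V₃ : ProjPlaneR := mkP 0 0 1 (vne _ _ _ 2 (by simp))
def S₁ : ProjPlaneR := mkP 1 1 1 (vne _ _ _ 0 (by norm_num))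
def S₂ : ProjPlaneR := mkP 4 4 1 (vne _ _ _ 0 (by norm_num))
def S₃ : ProjPlaneR := mkP 1 4 1 (vne _ _ _ 0 (by norm_num))
def S₄ : ProjPlaneR := mkP 4 1 1 (vne _ _ _ 0 (by norm_num))
def S₅ (α : ℝ) : ProjPlaneR := mkP 1 4 (2 * α) (vne _ _ _ 0 (by norm_num))
def S₆ (α : ℝ) : ProjPlaneR := mkP 1 (2 * α) 1 (vne _ _ _ 0 (by norm_num))
def S₇ (α : ℝ) : ProjPlaneR := mkP α 2 2 (vne _ _ _ 1 (by norm_num))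
def S₈ (β : ℝ) : ProjPlaneR := mkP 4 1 (2 * β) (vne _ _ _ 0 (by norm_num))
def S₉ (β : ℝ) : ProjPlaneR := mkP (2 * β) 1 1 (vne _ _ _ 1 (by norm_num))
def S₁₀ (β : ℝ) : ProjPlaneR := mkP 2 β 2 (vne _ _ _ 0 (by norm_num))

/-- The configuration `C²_{α,β}` as a set of 13 points of `ℙ²(ℝ)`. -/
def Cconf₂ (α β : ℝ) : Set ProjPlaneR :=
  {V₁, V₂, V₃, S₁, S₂, S₃, S₄, S₅ α, S₆ α, S₇ α, S₈ β, S₉ β, S₁₀ β}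

/-! ### Auxiliary machinery -/

/-- Explicit 3×3 determinant. -/
def det3 {R : Type*} [CommRing R] (u v w : Fin 3 → R) : R :=
  u 0 * (v 1 * w 2 - v 2 * w 1) - u 1 * (v 0 * w 2 - v 2 * w 0) + u 2 * (v 0 * w 1 - v 1 * w 0)

theorem coll_iff_det3 (u v w : Fin 3 → ℝ) (hu : u ≠ 0) (hv : v ≠ 0) (hw : w ≠ 0) :
    ProjCollinear {Projectivization.mk ℝ u hu, Projectivization.mk ℝ v hv,
      Projectivization.mk ℝ w hw} ↔ det3 u v w = 0 := by
  have key : ∀ (x : Fin 3 → ℝ) (hx : x ≠ 0) (f : (Fin 3 → ℝ) →ₗ[ℝ] ℝ),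
      f (Projectivization.mk ℝ x hx).rep = 0 ↔ f x = 0 := by
    intro x hx f
    obtain ⟨a, ha⟩ := Projectivization.exists_smul_eq_mk_rep ℝ x hx
    rw [← ha, Units.smul_def, map_smul, smul_eq_zero]
    simp [a.ne_zero]
  have hdet : det3 u v w = (Matrix.of ![u, v, w]).det := by
    rw [Matrix.det_fin_three]
    simp only [Matrix.of_apply, Matrix.cons_val', Matrix.cons_val_zero, Matrix.cons_val_one,
      Matrix.head_cons, Matrix.cons_val_two, Matrix.head_fin_const, Matrix.empty_val',
      Matrix.cons_val_fin_one, Matrix.tail_cons]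
    rw [det3]
    ring
  have hdp : ∀ (f : (Fin 3 → ℝ) →ₗ[ℝ] ℝ) (y : Fin 3 → ℝ),
      dotProduct y (fun j => f fun m => if j = m then 1 else 0) = f y := by
    intro f y
    rw [LinearMap.pi_apply_eq_sum_univ f y, dotProduct]
    simp [smul_eq_mul]
  constructor
  · rintro ⟨f, hf0, hf⟩
    have hu' : f u = 0 := (key u hu f).1 (hf _ (by simp))
    have hv' : f v = 0 := (key v hv f).1 (hf _ (by simp))
    have hw' : f w = 0 := (key w hw f).1 (hf _ (by simp))
    rw [hdet, ← Matrix.exists_mulVec_eq_zero_iff]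
    refine ⟨fun j => f (fun m => if j = m then 1 else 0), ?_, ?_⟩
    · intro h
      apply hf0
      apply LinearMap.ext
      intro x
      rw [LinearMap.pi_apply_eq_sum_univ f x]
      have hz : ∀ i : Fin 3, (f fun j => if i = j then 1 else 0) = 0 := fun i => congrFun h i
      simp [hz]
    · funext i
      fin_cases i
      · show dotProduct u _ = 0
        rw [hdp]; exact hu'
      · show dotProduct v _ = 0
        rw [hdp]; exact hv'
      · show dotProduct w _ = 0
        rw [hdp]; exact hw'
  · intro hd
    rw [hdet, ← Matrix.exists_mulVec_eq_zero_iff] at hd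
    obtain ⟨c, hc0, hc⟩ := hd
    refine ⟨∑ j, c j • LinearMap.proj j, ?_, ?_⟩
    · intro h
      apply hc0
      funext j
      have h2 := LinearMap.congr_fun h (fun m => if m = j then 1 else 0)
      simpa [LinearMap.proj, Finset.sum_ite_eq] using h2
    · have hval : ∀ (x : Fin 3 → ℝ), (∑ j, x j * c j = 0) →
          (∑ j, c j • LinearMap.proj (R := ℝ) (φ := fun _ : Fin 3 => ℝ) j) x = 0 := by
        intro x hx
        simp only [LinearMap.sum_apply, LinearMap.smul_apply, LinearMap.proj_apply,
          smul_eq_mul]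
        rw [← hx]
        exact Finset.sum_congr rfl fun i _ => mul_comm _ _
      intro p hp
      rcases hp with rfl | rfl | rfl
      · rw [key]
        exact hval u (congrFun hc 0)
      · rw [key]
        exact hval v (congrFun hc 1)
      · rw [key]
        exact hval w (congrFun hc 2)

/-- Integer coordinate vectors of the 13 configuration points. -/
def vZ (a b : ℤ) : Fin 13 → Fin 3 → ℤ :=
  ![![0,1,0], ![1,0,0], ![0,0,1], ![1,1,1], ![4,4,1], ![1,4,1], ![4,1,1],
    ![1,4,2*a], ![1,2*a,1], ![a,2,2], ![4,1,2*b], ![2*b,1,1], ![2,b,2]]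

/-- Real coordinate vectors. -/
def vR (a b : ℤ) : Fin 13 → Fin 3 → ℝ := fun i m => ((vZ a b i m : ℤ) : ℝ)

/-- Index sets of the thirteen lines. -/
def lines : List (List (Fin 13)) :=
  [[0,3,5,8,12],[0,4,6],[0,7,9],[0,10,11],[1,3,6,9,11],[1,4,5],[1,7,8],[1,10,12],
   [2,3,4],[2,5,7],[2,6,10],[2,8,9],[2,11,12]]

/-- Combinatorial collinearity predicate. -/
def T (i j k : Fin 13) : Prop := ∃ l ∈ lines, i ∈ l ∧ j ∈ l ∧ k ∈ l

instance (i j k : Fin 13) : Decidable (T i j k) := by unfold T; infer_instance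

/-- Number of (ordered, distinct) collinear pairs through a point. -/
def Ncnt (i : Fin 13) : ℕ :=
  (Finset.univ.filter (fun p : Fin 13 × Fin 13 =>
    i ≠ p.1 ∧ i ≠ p.2 ∧ p.1 ≠ p.2 ∧ T i p.1 p.2)).card

theorem keyN : ∀ i : Fin 13, (Ncnt i = 18 ∨ Ncnt i = 10) ↔ i ∈ ({0,1,2} : Finset (Fin 13)) := by
  decide

theorem detiff : ∀ a b : ℤ, (a = 1 ∨ a = -1) → (b = 1 ∨ b = -1) → ∀ i j k : Fin 13,
    (det3 (vZ a b i) (vZ a b j) (vZ a b k) = 0 ↔ (i = j ∨ i = k ∨ j = k ∨ T i j k)) := by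
  rintro a b (rfl|rfl) (rfl|rfl) <;> decide

theorem crossne : ∀ a b : ℤ, (a = 1 ∨ a = -1) → (b = 1 ∨ b = -1) → ∀ i j : Fin 13, i ≠ j →
    ¬(vZ a b i 0 * vZ a b j 1 - vZ a b i 1 * vZ a b j 0 = 0 ∧
      vZ a b i 0 * vZ a b j 2 - vZ a b i 2 * vZ a b j 0 = 0 ∧
      vZ a b i 1 * vZ a b j 2 - vZ a b i 2 * vZ a b j 1 = 0) := by
  rintro a b (rfl|rfl) (rfl|rfl) <;> decide


/-- The index-level form of the right-hand side of statement (i). -/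
def RHSp (i j k : Fin 13) : Prop :=
  (i = 0 ∨ i = 3 ∨ i = 5 ∨ i = 8 ∨ i = 12) ∧
      (j = 0 ∨ j = 3 ∨ j = 5 ∨ j = 8 ∨ j = 12) ∧ (k = 0 ∨ k = 3 ∨ k = 5 ∨ k = 8 ∨ k = 12) ∨
    (i = 0 ∨ i = 4 ∨ i = 6) ∧ (j = 0 ∨ j = 4 ∨ j = 6) ∧ (k = 0 ∨ k = 4 ∨ k = 6) ∨
      (i = 0 ∨ i = 7 ∨ i = 9) ∧ (j = 0 ∨ j = 7 ∨ j = 9) ∧ (k = 0 ∨ k = 7 ∨ k = 9) ∨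
        (i = 0 ∨ i = 10 ∨ i = 11) ∧ (j = 0 ∨ j = 10 ∨ j = 11) ∧ (k = 0 ∨ k = 10 ∨ k = 11) ∨
          (i = 1 ∨ i = 3 ∨ i = 6 ∨ i = 9 ∨ i = 11) ∧
              (j = 1 ∨ j = 3 ∨ j = 6 ∨ j = 9 ∨ j = 11) ∧ (k = 1 ∨ k = 3 ∨ k = 6 ∨ k = 9 ∨ k = 11) ∨
            (i = 1 ∨ i = 4 ∨ i = 5) ∧ (j = 1 ∨ j = 4 ∨ j = 5) ∧ (k = 1 ∨ k = 4 ∨ k = 5) ∨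
              (i = 1 ∨ i = 7 ∨ i = 8) ∧ (j = 1 ∨ j = 7 ∨ j = 8) ∧ (k = 1 ∨ k = 7 ∨ k = 8) ∨
                (i = 1 ∨ i = 10 ∨ i = 12) ∧ (j = 1 ∨ j = 10 ∨ j = 12) ∧ (k = 1 ∨ k = 10 ∨ k = 12) ∨
                  (i = 2 ∨ i = 3 ∨ i = 4) ∧ (j = 2 ∨ j = 3 ∨ j = 4) ∧ (k = 2 ∨ k = 3 ∨ k = 4) ∨
                    (i = 2 ∨ i = 5 ∨ i = 7) ∧ (j = 2 ∨ j = 5 ∨ j = 7) ∧ (k = 2 ∨ k = 5 ∨ k = 7) ∨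
                      (i = 2 ∨ i = 6 ∨ i = 10) ∧ (j = 2 ∨ j = 6 ∨ j = 10) ∧ (k = 2 ∨ k = 6 ∨ k = 10) ∨
                        (i = 2 ∨ i = 8 ∨ i = 9) ∧ (j = 2 ∨ j = 8 ∨ j = 9) ∧ (k = 2 ∨ k = 8 ∨ k = 9) ∨
                          (i = 2 ∨ i = 11 ∨ i = 12) ∧ (j = 2 ∨ j = 11 ∨ j = 12) ∧ (k = 2 ∨ k = 11 ∨ k = 12)

set_option synthInstance.maxSize 2000 in
instance (i j k : Fin 13) : Decidable (RHSp i j k) := by unfold RHSp; infer_instance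

set_option maxHeartbeats 1000000 in
theorem combKey : ∀ i j k : Fin 13, i ≠ j → i ≠ k → j ≠ k →
    ((i = j ∨ i = k ∨ j = k ∨ T i j k) ↔ RHSp i j k) := by decide

theorem vR_ne (a b : ℤ) (i : Fin 13) : vR a b i ≠ 0 := by
  have key : ∀ (m : Fin 3), vR a b i m ≠ 0 → vR a b i ≠ 0 :=
    fun m hm h => hm (by rw [h]; rfl)
  fin_cases i
  · exact key 1 (by norm_num [vR, vZ])
  · exact key 0 (by norm_num [vR, vZ])
  · exact key 2 (by norm_num [vR, vZ]; simp)
  · exact key 0 (by norm_num [vR, vZ])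
  · exact key 0 (by norm_num [vR, vZ])
  · exact key 0 (by norm_num [vR, vZ])
  · exact key 0 (by norm_num [vR, vZ])
  · exact key 0 (by norm_num [vR, vZ])
  · exact key 0 (by norm_num [vR, vZ])
  · exact key 1 (by norm_num [vR, vZ])
  · exact key 0 (by norm_num [vR, vZ])
  · exact key 1 (by norm_num [vR, vZ])
  · exact key 0 (by norm_num [vR, vZ])

/-- The 13 points as a function of the index. -/
def eP (a b : ℤ) (i : Fin 13) : ProjPlaneR := Projectivization.mk ℝ (vR a b i) (vR_ne a b i)

theorem mkP_eq (a b c : ℝ) (h : ![a,b,c] ≠ 0) (v : Fin 3 → ℝ) (hv : v ≠ 0)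
    (he : ![a,b,c] = v) : mkP a b c h = Projectivization.mk ℝ v hv := by
  subst he; rfl

theorem det3_cast (u v w : Fin 3 → ℤ) :
    det3 (fun m => ((u m : ℤ) : ℝ)) (fun m => ((v m : ℤ) : ℝ)) (fun m => ((w m : ℤ) : ℝ))
      = ((det3 u v w : ℤ) : ℝ) := by
  simp only [det3]
  push_cast
  ring

theorem eP_coll (a b : ℤ) (ha : a = 1 ∨ a = -1) (hb : b = 1 ∨ b = -1) (i j k : Fin 13) :
    ProjCollinear {eP a b i, eP a b j, eP a b k} ↔ (i = j ∨ i = k ∨ j = k ∨ T i j k) := by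
  rw [eP, eP, eP, coll_iff_det3]
  rw [show vR a b i = fun m => ((vZ a b i m : ℤ) : ℝ) from rfl,
    show vR a b j = fun m => ((vZ a b j m : ℤ) : ℝ) from rfl,
    show vR a b k = fun m => ((vZ a b k m : ℤ) : ℝ) from rfl, det3_cast, Int.cast_eq_zero]
  exact detiff a b ha hb i j k

theorem eP_inj (a b : ℤ) (ha : a = 1 ∨ a = -1) (hb : b = 1 ∨ b = -1) :
    Function.Injective (eP a b) := by
  intro i j h
  by_contra hne
  apply crossne a b ha hb i j hne
  rw [eP, eP, Projectivization.mk_eq_mk_iff'] at h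
  obtain ⟨c, hc⟩ := h
  have h0 := congrFun hc 0
  have h1 := congrFun hc 1
  have h2 := congrFun hc 2
  simp only [Pi.smul_apply, smul_eq_mul] at h0 h1 h2
  have e0 : vR a b i 0 = ((vZ a b i 0 : ℤ) : ℝ) := rfl
  have e1 : vR a b i 1 = ((vZ a b i 1 : ℤ) : ℝ) := rfl
  have e2 : vR a b i 2 = ((vZ a b i 2 : ℤ) : ℝ) := rfl
  have f0 : vR a b j 0 = ((vZ a b j 0 : ℤ) : ℝ) := rfl
  have f1 : vR a b j 1 = ((vZ a b j 1 : ℤ) : ℝ) := rfl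
  have f2 : vR a b j 2 = ((vZ a b j 2 : ℤ) : ℝ) := rfl
  refine ⟨?_, ?_, ?_⟩ <;> [skip; skip; skip] <;>
    [ (have key : ((vZ a b i 0 * vZ a b j 1 - vZ a b i 1 * vZ a b j 0 : ℤ) : ℝ) = 0 := by
        push_cast
        rw [← e0, ← e1, ← f0, ← f1]
        rw [← h0, ← h1]; ring);
      (have key : ((vZ a b i 0 * vZ a b j 2 - vZ a b i 2 * vZ a b j 0 : ℤ) : ℝ) = 0 := by
        push_cast
        rw [← e0, ← e2, ← f0, ← f2]
        rw [← h0, ← h2]; ring);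
      (have key : ((vZ a b i 1 * vZ a b j 2 - vZ a b i 2 * vZ a b j 1 : ℤ) : ℝ) = 0 := by
        push_cast
        rw [← e1, ← e2, ← f1, ← f2]
        rw [← h1, ← h2]; ring)] <;>
    exact_mod_cast key

set_option maxHeartbeats 1000000 in
theorem main_lemma (a b : ℤ) (ha : a = 1 ∨ a = -1) (hb : b = 1 ∨ b = -1) :
    (∀ p q r : ProjPlaneR, p ∈ Cconf₂ (a:ℝ) (b:ℝ) → q ∈ Cconf₂ (a:ℝ) (b:ℝ) →
      r ∈ Cconf₂ (a:ℝ) (b:ℝ) →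
      p ≠ q → p ≠ r → q ≠ r →
      (ProjCollinear {p, q, r} ↔
        (({p, q, r} : Set ProjPlaneR) ⊆ {V₁, S₁, S₃, S₆ (a:ℝ), S₁₀ (b:ℝ)} ∨
         ({p, q, r} : Set ProjPlaneR) ⊆ {V₁, S₂, S₄} ∨
         ({p, q, r} : Set ProjPlaneR) ⊆ {V₁, S₅ (a:ℝ), S₇ (a:ℝ)} ∨
         ({p, q, r} : Set ProjPlaneR) ⊆ {V₁, S₈ (b:ℝ), S₉ (b:ℝ)} ∨
         ({p, q, r} : Set ProjPlaneR) ⊆ {V₂, S₁, S₄, S₇ (a:ℝ), S₉ (b:ℝ)} ∨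
         ({p, q, r} : Set ProjPlaneR) ⊆ {V₂, S₂, S₃} ∨
         ({p, q, r} : Set ProjPlaneR) ⊆ {V₂, S₅ (a:ℝ), S₆ (a:ℝ)} ∨
         ({p, q, r} : Set ProjPlaneR) ⊆ {V₂, S₈ (b:ℝ), S₁₀ (b:ℝ)} ∨
         ({p, q, r} : Set ProjPlaneR) ⊆ {V₃, S₁, S₂} ∨
         ({p, q, r} : Set ProjPlaneR) ⊆ {V₃, S₃, S₅ (a:ℝ)} ∨
         ({p, q, r} : Set ProjPlaneR) ⊆ {V₃, S₄, S₈ (b:ℝ)} ∨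
         ({p, q, r} : Set ProjPlaneR) ⊆ {V₃, S₆ (a:ℝ), S₇ (a:ℝ)} ∨
         ({p, q, r} : Set ProjPlaneR) ⊆ {V₃, S₉ (b:ℝ), S₁₀ (b:ℝ)}))) ∧
    (∀ f : ProjPlaneR → ProjPlaneR,
      Set.BijOn f (Cconf₂ (a:ℝ) (b:ℝ)) (Cconf₂ (a:ℝ) (b:ℝ)) →
      (∀ p ∈ Cconf₂ (a:ℝ) (b:ℝ), ∀ q ∈ Cconf₂ (a:ℝ) (b:ℝ), ∀ r ∈ Cconf₂ (a:ℝ) (b:ℝ),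
        (ProjCollinear {p, q, r} ↔ ProjCollinear {f p, f q, f r})) →
      f '' ({V₁, V₂, V₃} : Set ProjPlaneR) = {V₁, V₂, V₃}) := by
  have hv0 : V₁ = eP a b 0 := mkP_eq _ _ _ _ _ _ (by
    funext m
    show ![(0:ℝ),1,0] m = ((![0,1,0] m : ℤ) : ℝ)
    fin_cases m <;> norm_num)
  have hv1 : V₂ = eP a b 1 := mkP_eq _ _ _ _ _ _ (by
    funext m
    show ![(1:ℝ),0,0] m = ((![1,0,0] m : ℤ) : ℝ)
    fin_cases m <;> norm_num)
  have hv2 : V₃ = eP a b 2 := mkP_eq _ _ _ _ _ _ (by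
    funext m
    show ![(0:ℝ),0,1] m = ((![0,0,1] m : ℤ) : ℝ)
    fin_cases m <;> norm_num)
  have hs1 : S₁ = eP a b 3 := mkP_eq _ _ _ _ _ _ (by
    funext m
    show ![(1:ℝ),1,1] m = ((![1,1,1] m : ℤ) : ℝ)
    fin_cases m <;> norm_num)
  have hs2 : S₂ = eP a b 4 := mkP_eq _ _ _ _ _ _ (by
    funext m
    show ![(4:ℝ),4,1] m = ((![4,4,1] m : ℤ) : ℝ)
    fin_cases m <;> norm_num)
  have hs3 : S₃ = eP a b 5 := mkP_eq _ _ _ _ _ _ (by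
    funext m
    show ![(1:ℝ),4,1] m = ((![1,4,1] m : ℤ) : ℝ)
    fin_cases m <;> norm_num)
  have hs4 : S₄ = eP a b 6 := mkP_eq _ _ _ _ _ _ (by
    funext m
    show ![(4:ℝ),1,1] m = ((![4,1,1] m : ℤ) : ℝ)
    fin_cases m <;> norm_num)
  have hs5 : S₅ (a:ℝ) = eP a b 7 := mkP_eq _ _ _ _ _ _ (by
    funext m
    show ![(1:ℝ),4,2*(a:ℝ)] m = ((![1,4,2*a] m : ℤ) : ℝ)
    fin_cases m <;> push_cast <;> norm_num)
  have hs6 : S₆ (a:ℝ) = eP a b 8 := mkP_eq _ _ _ _ _ _ (by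
    funext m
    show ![(1:ℝ),2*(a:ℝ),1] m = ((![1,2*a,1] m : ℤ) : ℝ)
    fin_cases m <;> push_cast <;> norm_num)
  have hs7 : S₇ (a:ℝ) = eP a b 9 := mkP_eq _ _ _ _ _ _ (by
    funext m
    show ![(a:ℝ),2,2] m = ((![a,2,2] m : ℤ) : ℝ)
    fin_cases m <;> push_cast <;> norm_num)
  have hs8 : S₈ (b:ℝ) = eP a b 10 := mkP_eq _ _ _ _ _ _ (by
    funext m
    show ![(4:ℝ),1,2*(b:ℝ)] m = ((![4,1,2*b] m : ℤ) : ℝ)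
    fin_cases m <;> push_cast <;> norm_num)
  have hs9 : S₉ (b:ℝ) = eP a b 11 := mkP_eq _ _ _ _ _ _ (by
    funext m
    show ![2*(b:ℝ),1,1] m = ((![2*b,1,1] m : ℤ) : ℝ)
    fin_cases m <;> push_cast <;> norm_num)
  have hs10 : S₁₀ (b:ℝ) = eP a b 12 := mkP_eq _ _ _ _ _ _ (by
    funext m
    show ![(2:ℝ),(b:ℝ),2] m = ((![2,b,2] m : ℤ) : ℝ)
    fin_cases m <;> push_cast <;> norm_num)
  have hInj : Function.Injective (eP a b) := eP_inj a b ha hb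
  have hColl := eP_coll a b ha hb
  have hE13 : ∀ p ∈ Cconf₂ (a:ℝ) (b:ℝ), ∃ i : Fin 13, p = eP a b i := by
    intro p hp
    simp only [Cconf₂, Set.mem_insert_iff, Set.mem_singleton_iff] at hp
    rcases hp with rfl|rfl|rfl|rfl|rfl|rfl|rfl|rfl|rfl|rfl|rfl|rfl|rfl
    exacts [⟨0, hv0⟩, ⟨1, hv1⟩, ⟨2, hv2⟩, ⟨3, hs1⟩, ⟨4, hs2⟩, ⟨5, hs3⟩, ⟨6, hs4⟩,
      ⟨7, hs5⟩, ⟨8, hs6⟩, ⟨9, hs7⟩, ⟨10, hs8⟩, ⟨11, hs9⟩, ⟨12, hs10⟩]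
  have heC : ∀ i : Fin 13, eP a b i ∈ Cconf₂ (a:ℝ) (b:ℝ) := by
    intro i
    simp only [Cconf₂, Set.mem_insert_iff, Set.mem_singleton_iff]
    fin_cases i
    exacts [Or.inl hv0.symm, Or.inr (Or.inl hv1.symm), Or.inr (Or.inr (Or.inl hv2.symm)),
      Or.inr (Or.inr (Or.inr (Or.inl hs1.symm))),
      Or.inr (Or.inr (Or.inr (Or.inr (Or.inl hs2.symm)))),
      Or.inr (Or.inr (Or.inr (Or.inr (Or.inr (Or.inl hs3.symm))))),
      Or.inr (Or.inr (Or.inr (Or.inr (Or.inr (Or.inr (Or.inl hs4.symm)))))),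
      Or.inr (Or.inr (Or.inr (Or.inr (Or.inr (Or.inr (Or.inr (Or.inl hs5.symm))))))),
      Or.inr (Or.inr (Or.inr (Or.inr (Or.inr (Or.inr (Or.inr (Or.inr (Or.inl hs6.symm)))))))),
      Or.inr (Or.inr (Or.inr (Or.inr (Or.inr (Or.inr (Or.inr (Or.inr (Or.inr
        (Or.inl hs7.symm))))))))),
      Or.inr (Or.inr (Or.inr (Or.inr (Or.inr (Or.inr (Or.inr (Or.inr (Or.inr (Or.inr
        (Or.inl hs8.symm)))))))))),
      Or.inr (Or.inr (Or.inr (Or.inr (Or.inr (Or.inr (Or.inr (Or.inr (Or.inr (Or.inr (Or.inr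
        (Or.inl hs9.symm))))))))))),
      Or.inr (Or.inr (Or.inr (Or.inr (Or.inr (Or.inr (Or.inr (Or.inr (Or.inr (Or.inr (Or.inr
        (Or.inr hs10.symm)))))))))))]
  constructor
  · -- part (i)
    intro p q r hp hq hr hpq hpr hqr
    obtain ⟨i, rfl⟩ := hE13 p hp
    obtain ⟨j, rfl⟩ := hE13 q hq
    obtain ⟨k, rfl⟩ := hE13 r hr
    have hij : i ≠ j := fun h => hpq (congrArg _ h)
    have hik : i ≠ k := fun h => hpr (congrArg _ h)
    have hjk : j ≠ k := fun h => hqr (congrArg _ h)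
    rw [hColl i j k, hv0, hv1, hv2, hs1, hs2, hs3, hs4, hs5, hs6, hs7, hs8, hs9, hs10]
    simp only [Set.insert_subset_iff, Set.singleton_subset_iff, Set.mem_insert_iff,
      Set.mem_singleton_iff, hInj.eq_iff]
    exact combKey i j k hij hik hjk
  · -- part (ii)
    intro f hf hpres
    have hex : ∀ i : Fin 13, ∃ j : Fin 13, f (eP a b i) = eP a b j :=
      fun i => hE13 _ (hf.mapsTo (heC i))
    choose σ hσ using hex
    have hσinj : Function.Injective σ := by
      intro i j h
      apply hInj
      apply hf.injOn (heC i) (heC j)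
      rw [hσ, hσ, h]
    have hσbij : Function.Bijective σ := Finite.injective_iff_bijective.mp hσinj
    have hTpres : ∀ i j k : Fin 13, i ≠ j → i ≠ k → j ≠ k →
        (T i j k ↔ T (σ i) (σ j) (σ k)) := by
      intro i j k hij hik hjk
      have h := hpres (eP a b i) (heC i) (eP a b j) (heC j) (eP a b k) (heC k)
      rw [hσ, hσ, hσ, hColl, hColl] at h
      have d1 : σ i ≠ σ j := fun hh => hij (hσinj hh)
      have d2 : σ i ≠ σ k := fun hh => hik (hσinj hh)
      have d3 : σ j ≠ σ k := fun hh => hjk (hσinj hh)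
      simpa [hij, hik, hjk, d1, d2, d3] using h
    have hNeq : ∀ i : Fin 13, Ncnt i = Ncnt (σ i) := by
      intro i
      apply Finset.card_equiv (Equiv.prodCongr (Equiv.ofBijective σ hσbij)
        (Equiv.ofBijective σ hσbij))
      rintro ⟨j, k⟩
      simp only [Finset.mem_filter, Finset.mem_univ, true_and, Equiv.prodCongr_apply,
        Equiv.ofBijective_apply, Prod.map]
      constructor
      · rintro ⟨h1, h2, h3, h4⟩
        exact ⟨fun h => h1 (hσinj h), fun h => h2 (hσinj h), fun h => h3 (hσinj h),
          (hTpres i j k h1 h2 h3).mp h4⟩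
      · rintro ⟨h1, h2, h3, h4⟩
        have g1 : i ≠ j := fun h => h1 (congrArg σ h)
        have g2 : i ≠ k := fun h => h2 (congrArg σ h)
        have g3 : j ≠ k := fun h => h3 (congrArg σ h)
        exact ⟨g1, g2, g3, (hTpres i j k g1 g2 g3).mpr h4⟩
    have hmemσ : ∀ i : Fin 13, i ∈ ({0,1,2} : Finset (Fin 13)) →
        σ i ∈ ({0,1,2} : Finset (Fin 13)) := by
      intro i hi
      refine (keyN (σ i)).1 ?_
      rw [← hNeq]
      exact (keyN i).2 hi
    have m0 := hmemσ 0 (by decide)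
    have m1 := hmemσ 1 (by decide)
    have m2 := hmemσ 2 (by decide)
    have d01 : σ 0 ≠ σ 1 := fun h => absurd (hσinj h) (by decide)
    have d02 : σ 0 ≠ σ 2 := fun h => absurd (hσinj h) (by decide)
    have d12 : σ 1 ≠ σ 2 := fun h => absurd (hσinj h) (by decide)
    rw [hv0, hv1, hv2, Set.image_insert_eq, Set.image_insert_eq, Set.image_singleton,
      hσ, hσ, hσ]
    simp only [Finset.mem_insert, Finset.mem_singleton] at m0 m1 m2
    rcases m0 with h0|h0|h0 <;> rcases m1 with h1|h1|h1 <;> rcases m2 with h2|h2|h2 <;>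
      rw [h0, h1, h2] <;>
      first
        | (exact absurd (h0.trans h1.symm) d01)
        | (exact absurd (h0.trans h2.symm) d02)
        | (exact absurd (h1.trans h2.symm) d12)
        | (apply Set.ext; intro x;
           simp only [Set.mem_insert_iff, Set.mem_singleton_iff]; tauto)

/--
For `α, β ∈ {−1,1}`:
(i) the maximal collinear subsets of `C²_{α,β}` are exactly the thirteen listed sets
(a three-element subset is collinear iff it is contained in one of them); and
(ii) every collinearity-preserving bijection `f` of `C²_{α,β}` satisfies
`f({V₁,V₂,V₃}) = {V₁,V₂,V₃}`.
-/
theorem stmt_8 (α β : ℝ) (hα : α = 1 ∨ α = -1) (hβ : β = 1 ∨ β = -1) :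
    (∀ p q r : ProjPlaneR, p ∈ Cconf₂ α β → q ∈ Cconf₂ α β → r ∈ Cconf₂ α β →
      p ≠ q → p ≠ r → q ≠ r →
      (ProjCollinear {p, q, r} ↔
        (({p, q, r} : Set ProjPlaneR) ⊆ {V₁, S₁, S₃, S₆ α, S₁₀ β} ∨
         ({p, q, r} : Set ProjPlaneR) ⊆ {V₁, S₂, S₄} ∨
         ({p, q, r} : Set ProjPlaneR) ⊆ {V₁, S₅ α, S₇ α} ∨
         ({p, q, r} : Set ProjPlaneR) ⊆ {V₁, S₈ β, S₉ β} ∨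
         ({p, q, r} : Set ProjPlaneR) ⊆ {V₂, S₁, S₄, S₇ α, S₉ β} ∨
         ({p, q, r} : Set ProjPlaneR) ⊆ {V₂, S₂, S₃} ∨
         ({p, q, r} : Set ProjPlaneR) ⊆ {V₂, S₅ α, S₆ α} ∨
         ({p, q, r} : Set ProjPlaneR) ⊆ {V₂, S₈ β, S₁₀ β} ∨
         ({p, q, r} : Set ProjPlaneR) ⊆ {V₃, S₁, S₂} ∨
         ({p, q, r} : Set ProjPlaneR) ⊆ {V₃, S₃, S₅ α} ∨
         ({p, q, r} : Set ProjPlaneR) ⊆ {V₃, S₄, S₈ β} ∨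
         ({p, q, r} : Set ProjPlaneR) ⊆ {V₃, S₆ α, S₇ α} ∨
         ({p, q, r} : Set ProjPlaneR) ⊆ {V₃, S₉ β, S₁₀ β}))) ∧
    (∀ f : ProjPlaneR → ProjPlaneR,
      Set.BijOn f (Cconf₂ α β) (Cconf₂ α β) →
      (∀ p ∈ Cconf₂ α β, ∀ q ∈ Cconf₂ α β, ∀ r ∈ Cconf₂ α β,
        (ProjCollinear {p, q, r} ↔ ProjCollinear {f p, f q, f r})) →
      f '' ({V₁, V₂, V₃} : Set ProjPlaneR) = {V₁, V₂, V₃}) := by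
  rcases hα with rfl | rfl <;> rcases hβ with rfl | rfl
  · have h := main_lemma 1 1 (Or.inl rfl) (Or.inl rfl)
    simp only [Int.cast_one] at h
    exact h
  · have h := main_lemma 1 (-1) (Or.inl rfl) (Or.inr rfl)
    simp only [Int.cast_one, Int.cast_neg] at h
    exact h
  · have h := main_lemma (-1) 1 (Or.inr rfl) (Or.inl rfl)
    simp only [Int.cast_one, Int.cast_neg] at h
    exact h
  · have h := main_lemma (-1) (-1) (Or.inr rfl) (Or.inr rfl)
    simp only [Int.cast_one, Int.cast_neg] at h
    exact h

end
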